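/- Let k ≥ 1 be a natural number and let P be a finite set of at most k points of the circle AddCircle (1:ℝ) of circumference 1, equipped with its Haar (Lebesgue) measure of total mass 1. Then the measure of the set of points t ∈ AddCircle 1 such that the arc {t + s : s ∈ [0, 1/(2k)]} contains no point of P is at least 1/2. -/

import Mathlib

open MeasureTheory

/-- Attacker-side bound in Theorem 2: for any set `P` of at most `k` booby traps on the
circle of circumference 1, the measure of starting points `t` for which the arc
`{t + s : s ∈ [0, 1/(2k)]}` avoids `P` is at least `1/2`. -/
theorem circle_attacker_bound (k : ℕ) (hk : 1 ≤ k)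
    (P : Finset (AddCircle (1 : ℝ))) (hP : P.card ≤ k) :
    (1 / 2 : ENNReal) ≤
      volume {t : AddCircle (1 : ℝ) |
        ∀ s : ℝ, s ∈ Set.Icc (0 : ℝ) (1 / (2 * (k : ℝ))) →
          t + (s : AddCircle (1 : ℝ)) ∉ P} := by
  set L : ℝ := 1 / (2 * (k : ℝ)) with hL
  have hk0 : (0 : ℝ) < k := by exact_mod_cast hk
  have hLpos : 0 < L := by positivity
  have hk1 : (1 : ℝ) ≤ k := by exact_mod_cast hk
  have hLle : L ≤ 1 / 2 := by
    rw [hL, div_le_div_iff₀ (by positivity) (by norm_num)]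
    nlinarith
  set G : Set (AddCircle (1 : ℝ)) :=
    {t : AddCircle (1 : ℝ) |
        ∀ s : ℝ, s ∈ Set.Icc (0 : ℝ) L → t + (s : AddCircle (1 : ℝ)) ∉ P} with hG
  -- complement is covered by balls
  have hcover : Gᶜ ⊆ ⋃ p ∈ P, Metric.closedBall (p - ((L / 2 : ℝ) : AddCircle (1 : ℝ))) (L / 2) := by
    intro t ht
    simp only [hG, Set.mem_compl_iff, Set.mem_setOf_eq, not_forall] at ht
    obtain ⟨s, hs, hsp⟩ := ht
    rw [not_not] at hsp
    refine Set.mem_iUnion₂.mpr ⟨t + (s : AddCircle (1 : ℝ)), hsp, ?_⟩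
    have hst : t - (t + (s : AddCircle (1 : ℝ)) - ((L / 2 : ℝ) : AddCircle (1 : ℝ)))
        = ((L / 2 - s : ℝ) : AddCircle (1 : ℝ)) := by
      rw [QuotientAddGroup.mk_sub]
      abel
    rw [Metric.mem_closedBall, dist_eq_norm, hst]
    have habs : |L / 2 - s| ≤ L / 2 := by
      rw [abs_le]
      constructor <;> [linarith [hs.2]; linarith [hs.1]]
    have hnorm : ‖((L / 2 - s : ℝ) : AddCircle (1 : ℝ))‖ = |L / 2 - s| :=
      (AddCircle.norm_coe_eq_abs_iff (p := (1 : ℝ)) one_ne_zero).mpr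
        (by rw [abs_one]; linarith)
    rw [hnorm]
    exact habs
  have hball : ∀ p : AddCircle (1 : ℝ),
      volume (Metric.closedBall p (L / 2)) = ENNReal.ofReal L := by
    intro p
    rw [AddCircle.volume_closedBall]
    congr 1
    rw [min_eq_right]
    · ring
    · linarith
  have hbad : volume Gᶜ ≤ 1 / 2 := by
    calc volume Gᶜ
        ≤ ∑ p ∈ P, volume (Metric.closedBall (p - ((L / 2 : ℝ) : AddCircle (1 : ℝ))) (L / 2)) :=
          (measure_mono hcover).trans (measure_biUnion_finset_le P _)
      _ = ∑ p ∈ P, ENNReal.ofReal L := by simp [hball]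
      _ = P.card * ENNReal.ofReal L := by rw [Finset.sum_const, nsmul_eq_mul]
      _ ≤ k * ENNReal.ofReal L := by
          gcongr
      _ ≤ 1 / 2 := by
          have : (k : ENNReal) * ENNReal.ofReal L = ENNReal.ofReal (k * L) := by
            rw [ENNReal.ofReal_mul (by positivity)]
            simp
          rw [this]
          have hkL : (k : ℝ) * L = 1 / 2 := by
            field_simp [hL]
            rw [hL, mul_one_div, div_mul_eq_mul_div, div_eq_one_iff_eq (by positivity)]; ring
          rw [hkL]
          rw [ENNReal.ofReal_div_of_pos (by norm_num)]
          simp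
  have huniv : (1 : ENNReal) ≤ volume G + 1 / 2 := by
    have h1 : volume (Set.univ : Set (AddCircle (1 : ℝ))) = 1 := by
      rw [AddCircle.measure_univ]; simp
    calc (1 : ENNReal) = volume (Set.univ : Set (AddCircle (1 : ℝ))) := h1.symm
      _ = volume (G ∪ Gᶜ) := by rw [Set.union_compl_self]
      _ ≤ volume G + volume Gᶜ := measure_union_le _ _
      _ ≤ volume G + 1 / 2 := by gcongr
  have h := tsub_le_iff_right.mpr huniv
  have h12 : (1 : ENNReal) - 1 / 2 = 1 / 2 := by
    rw [ENNReal.sub_half ENNReal.one_ne_top]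
  rwa [h12] at h
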